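/- For any positive integers N and n with n > 2^N, and for x with x_k = 1 and x_j = 0 for all j < N, j ≠ k (for some 0 ≤ k ≤ N−1), the Walsh–Fejér kernel satisfies ∫_{I_N} |K_n(x − t)| dμ(t) ≤ c · 2^k / 2^N for an absolute constant c, where I_N = {t : t_0 = ... = t_{N-1} = 0} and x − t denotes coordinatewise addition mod 2. -/

import Mathlib

open Finset

/-- The dyadic group `G = (ℤ/2)^ℕ`. -/
abbrev G := ℕ → ZMod 2

/-- Walsh–Paley functions: `w n x = ∏ k, ((-1)^(x k))^(n_k)` for the binary expansion of `n`. -/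
noncomputable def walsh (n : ℕ) (x : G) : ℝ :=
  ∏ k ∈ Finset.range (n + 1), if n.testBit k then (-1 : ℝ) ^ (x k).val else 1

/-- Walsh–Dirichlet kernels `D m = ∑_{k<m} w k`. -/
noncomputable def dirichlet (m : ℕ) (x : G) : ℝ :=
  ∑ k ∈ Finset.range m, walsh k x

/-- Walsh–Fejér kernels `K n = (1/n) ∑_{k<n} D k`. -/
noncomputable def fejer (n : ℕ) (x : G) : ℝ :=
  (1 / (n : ℝ)) * ∑ k ∈ Finset.range n, dirichlet k x

/-- The cylinder set `I_N = {t : t_0 = ⋯ = t_{N-1} = 0}`. -/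
def IN (N : ℕ) : Set G := {t | ∀ j < N, t j = 0}

open MeasureTheory
open scoped ENNReal

instance : TopologicalSpace (ZMod 2) := ⊥
instance : DiscreteTopology (ZMod 2) := ⟨rfl⟩
instance : MeasurableSpace G := borel G
instance : BorelSpace G := ⟨rfl⟩

/-- The normalized Haar measure on the compact group `G`. -/
noncomputable def haarG : Measure G :=
  Measure.addHaarMeasure ⟨⟨Set.univ, isCompact_univ⟩, by simp⟩

/-! ### Auxiliary lemmas on Walsh functions -/

lemma walsh_eq_prod (n M : ℕ) (x : G) (h : n < M) :
    walsh n x = ∏ j ∈ Finset.range M, (if n.testBit j then (-1 : ℝ) ^ (x j).val else 1) := by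
  rw [walsh]
  apply Finset.prod_subset (Finset.range_subset_range.2 h)
  intro j hj hnj
  simp only [Finset.mem_range] at hj hnj
  have hn2 : n < 2 ^ j := by
    calc n < 2 ^ n := Nat.lt_two_pow_self
    _ ≤ 2 ^ j := Nat.pow_le_pow_right (by norm_num) (by omega)
  rw [Nat.testBit_lt_two_pow hn2]
  simp

lemma abs_walsh_le_one (n : ℕ) (x : G) : |walsh n x| ≤ 1 := by
  rw [walsh, Finset.abs_prod]
  apply Finset.prod_le_one (fun j _ => abs_nonneg _)
  intro j _
  split
  · rw [abs_pow, abs_neg, abs_one, one_pow]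
  · simp

lemma walsh_block_add (c q i : ℕ) (hi : i < 2 ^ c) (x : G) :
    walsh (2 ^ c * q + i) x = walsh (2 ^ c * q) x * walsh i x := by
  set M := 2 ^ c * q + i + 1 with hM
  rw [walsh_eq_prod (2 ^ c * q + i) M x (by omega),
      walsh_eq_prod (2 ^ c * q) M x (by nlinarith [Nat.one_le_two_pow (n := c)]),
      walsh_eq_prod i M x (by omega), ← Finset.prod_mul_distrib]
  apply Finset.prod_congr rfl
  intro j _
  rw [Nat.testBit_two_pow_mul_add q hi j, Nat.testBit_two_pow_mul]
  rcases lt_or_ge j c with h | h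
  · simp [h, Nat.not_le.2 h]
  · have hij : i < 2 ^ j := lt_of_lt_of_le hi (Nat.pow_le_pow_right (by norm_num) h)
    simp [Nat.not_lt.2 h, h, Nat.testBit_lt_two_pow hij]

lemma walsh_two_pow (c : ℕ) (x : G) : walsh (2 ^ c) x = (-1 : ℝ) ^ (x c).val := by
  have hc : c < 2 ^ c + 1 := by
    have := Nat.lt_two_pow_self (n := c)
    omega
  rw [walsh, Finset.prod_eq_single c]
  · rw [Nat.testBit_two_pow_self]; simp
  · intro j _ hj
    rw [Nat.testBit_two_pow_of_ne (Ne.symm hj)]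
    simp
  · intro h
    exact absurd (Finset.mem_range.2 hc) h

lemma sum_walsh_block {k : ℕ} {y : G} (hk : y k = 1) :
    ∑ i ∈ Finset.range (2 ^ (k + 1)), walsh i y = 0 := by
  have h2 : 2 ^ (k + 1) = 2 ^ k + 2 ^ k := by ring
  rw [h2, Finset.sum_range_add]
  have hcong : ∀ i ∈ Finset.range (2 ^ k), walsh (2 ^ k + i) y = walsh (2 ^ k) y * walsh i y := by
    intro i hi
    have := walsh_block_add k 1 i (Finset.mem_range.1 hi) y
    rwa [mul_one] at this
  rw [Finset.sum_congr rfl hcong, ← Finset.mul_sum, walsh_two_pow, hk]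
  have hv : (1 : ZMod 2).val = 1 := rfl
  rw [hv]
  ring

lemma sum_walsh_block_shift {k : ℕ} {y : G} (hk : y k = 1) (q : ℕ) :
    ∑ i ∈ Finset.range (2 ^ (k + 1)), walsh (2 ^ (k + 1) * q + i) y = 0 := by
  have hcong : ∀ i ∈ Finset.range (2 ^ (k + 1)),
      walsh (2 ^ (k + 1) * q + i) y = walsh (2 ^ (k + 1) * q) y * walsh i y := by
    intro i hi
    exact walsh_block_add (k + 1) q i (Finset.mem_range.1 hi) y
  rw [Finset.sum_congr rfl hcong, ← Finset.mul_sum, sum_walsh_block hk, mul_zero]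

lemma sum_walsh_blocks {k : ℕ} {y : G} (hk : y k = 1) (q : ℕ) :
    ∑ i ∈ Finset.range (2 ^ (k + 1) * q), walsh i y = 0 := by
  induction q with
  | zero => simp
  | succ q ih =>
    have h : 2 ^ (k + 1) * (q + 1) = 2 ^ (k + 1) * q + 2 ^ (k + 1) := by ring
    rw [h, Finset.sum_range_add, ih, zero_add]
    exact sum_walsh_block_shift hk q

lemma abs_dirichlet_le {k : ℕ} {y : G} (hk : y k = 1) (m : ℕ) :
    |dirichlet m y| ≤ 2 ^ (k + 1) := by
  have hm : 2 ^ (k + 1) * (m / 2 ^ (k + 1)) + m % 2 ^ (k + 1) = m := Nat.div_add_mod m _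
  rw [dirichlet, ← hm, Finset.sum_range_add, sum_walsh_blocks hk, zero_add]
  calc |∑ i ∈ Finset.range (m % 2 ^ (k + 1)),
          walsh (2 ^ (k + 1) * (m / 2 ^ (k + 1)) + i) y|
      ≤ ∑ i ∈ Finset.range (m % 2 ^ (k + 1)), |walsh (2 ^ (k + 1) * (m / 2 ^ (k + 1)) + i) y| :=
        Finset.abs_sum_le_sum_abs _ _
    _ ≤ ∑ _i ∈ Finset.range (m % 2 ^ (k + 1)), (1 : ℝ) :=
        Finset.sum_le_sum (fun i _ => abs_walsh_le_one _ _)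
    _ = (m % 2 ^ (k + 1) : ℕ) := by simp
    _ ≤ ((2 ^ (k + 1) : ℕ) : ℝ) := by
        exact_mod_cast (Nat.mod_lt m (Nat.two_pow_pos _)).le
    _ = 2 ^ (k + 1) := by push_cast; ring

lemma abs_fejer_le {k : ℕ} {y : G} (hk : y k = 1) {n : ℕ} (hn : 0 < n) :
    |fejer n y| ≤ 2 ^ (k + 1) := by
  rw [fejer, abs_mul]
  have h1 : |(1 / (n : ℝ))| = 1 / n := abs_of_nonneg (by positivity)
  have h2 : |∑ j ∈ Finset.range n, dirichlet j y| ≤ n * 2 ^ (k + 1) := by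
    calc |∑ j ∈ Finset.range n, dirichlet j y|
        ≤ ∑ j ∈ Finset.range n, |dirichlet j y| := Finset.abs_sum_le_sum_abs _ _
      _ ≤ ∑ _j ∈ Finset.range n, (2 ^ (k + 1) : ℝ) :=
          Finset.sum_le_sum (fun j _ => abs_dirichlet_le hk j)
      _ = n * 2 ^ (k + 1) := by simp [mul_comm]
  rw [h1]
  have hn' : (0 : ℝ) < n := by exact_mod_cast hn
  calc 1 / (n : ℝ) * |∑ j ∈ Finset.range n, dirichlet j y|
      ≤ 1 / (n : ℝ) * (n * 2 ^ (k + 1)) := by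
        apply mul_le_mul_of_nonneg_left h2 (by positivity)
    _ = 2 ^ (k + 1) := by field_simp

/-! ### Measure-theoretic lemmas -/

lemma continuous_walsh (n : ℕ) : Continuous (walsh n) := by
  apply continuous_finset_prod
  intro j _
  split
  · exact (continuous_of_discreteTopology
      (f := fun v : ZMod 2 => (-1 : ℝ) ^ v.val)).comp (continuous_apply j)
  · exact continuous_const

lemma continuous_fejer (n : ℕ) : Continuous (fejer n) := by
  apply Continuous.mul continuous_const
  apply continuous_finset_sum
  intro j _
  apply continuous_finset_sum
  intro i _
  exact continuous_walsh i

lemma measurableSet_cyl (N : ℕ) (v : ℕ → ZMod 2) :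
    MeasurableSet {g : G | ∀ j < N, g j = v j} := by
  have h : {g : G | ∀ j < N, g j = v j} = ⋂ j ∈ Set.Iio N, (fun g : G => g j) ⁻¹' {v j} := by
    ext g; simp [Set.mem_iInter]
  rw [h]
  apply MeasurableSet.biInter (Set.to_countable _)
  intro j _
  exact (((continuous_apply j).isOpen_preimage _ (isOpen_discrete _))).measurableSet

lemma measurableSet_IN (N : ℕ) : MeasurableSet (IN N) := by
  have h : IN N = {g : G | ∀ j < N, g j = (0 : ZMod 2)} := rfl
  rw [h]
  exact measurableSet_cyl N 0

instance : haarG.IsAddLeftInvariant :=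
  Measure.isAddLeftInvariant_addHaarMeasure _

lemma haarG_univ : haarG Set.univ = 1 :=
  Measure.addHaarMeasure_self (K₀ := ⟨⟨Set.univ, isCompact_univ⟩, by simp⟩)

lemma haarG_IN (N : ℕ) : haarG (IN N) = (2 ^ N)⁻¹ := by
  classical
  set S : (Fin N → ZMod 2) → Set G := fun v => {g : G | ∀ j < N, g j = if h : j < N then v ⟨j, h⟩ else 0} with hS
  have hmeas : ∀ v, MeasurableSet (S v) := fun v =>
    measurableSet_cyl N (fun j => if h : j < N then v ⟨j, h⟩ else 0)
  have hSm : ∀ v, haarG (S v) = haarG (IN N) := by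
    intro v
    set a : G := fun j => if h : j < N then v ⟨j, h⟩ else 0 with ha
    have hpre : (fun t : G => a + t) ⁻¹' (S v) = IN N := by
      ext t
      simp only [Set.mem_preimage, hS, Set.mem_setOf_eq, IN, Pi.add_apply]
      constructor
      · intro h j hj
        have h1 := h j hj
        have ha' : a j = v ⟨j, hj⟩ := dif_pos hj
        rw [dif_pos hj, ← ha'] at h1
        exact add_eq_left.mp h1
      · intro h j hj
        rw [h j hj, add_zero]
    calc haarG (S v) = haarG ((fun t : G => a + t) ⁻¹' (S v)) :=
          (measure_preimage_add haarG a (S v)).symm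
      _ = haarG (IN N) := by rw [hpre]
  have hdisj : Pairwise (Function.onFun Disjoint S) := by
    intro v w hvw
    apply Set.disjoint_left.2
    intro g hgv hgw
    apply hvw
    funext j
    have h1 := hgv j.1 j.2
    have h2 := hgw j.1 j.2
    simp only [dif_pos j.2] at h1 h2
    have h3 : v ⟨j.1, j.2⟩ = w ⟨j.1, j.2⟩ := h1.symm.trans h2
    simpa using h3
  have hcover : (⋃ v, S v) = Set.univ := by
    apply Set.eq_univ_of_forall
    intro g
    refine Set.mem_iUnion.2 ⟨fun j => g j.1, ?_⟩
    intro j hj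
    simp [dif_pos hj]
  have hsum : ∑' v, haarG (S v) = 1 := by
    rw [← measure_iUnion hdisj hmeas, hcover, haarG_univ]
  rw [tsum_congr hSm, tsum_fintype, Finset.sum_const, Finset.card_univ] at hsum
  have hcard : Fintype.card (Fin N → ZMod 2) = 2 ^ N := by simp
  rw [hcard, nsmul_eq_mul] at hsum
  have h2 : ((2 : ℝ≥0∞) ^ N) ≠ 0 := by positivity
  have h3 : ((2 : ℝ≥0∞) ^ N) ≠ ⊤ := by
    exact ENNReal.pow_ne_top (by norm_num)
  have : ((2 ^ N : ℕ) : ℝ≥0∞) = (2 : ℝ≥0∞) ^ N := by push_cast; ring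
  rw [this] at hsum
  calc haarG (IN N) = (2 ^ N : ℝ≥0∞)⁻¹ * ((2 : ℝ≥0∞) ^ N * haarG (IN N)) := by
        rw [← mul_assoc, ENNReal.inv_mul_cancel h2 h3, one_mul]
    _ = (2 ^ N)⁻¹ := by rw [hsum, mul_one]

/-- **Fejér kernel integral estimate (single spike case).** There is an absolute constant `c`
such that for all positive integers `N`, `n` with `n > 2^N`, `0 ≤ k ≤ N−1`, and all `x ∈ G`
with `x_k = 1` and `x_j = 0` for all `j < N`, `j ≠ k`:
`∫_{I_N} |K_n(x − t)| dμ(t) ≤ c · 2^k / 2^N`. -/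
theorem fejer_integral_estimate_single :
    ∃ c : ℝ, 0 < c ∧ ∀ (N n k : ℕ) (x : G), 1 ≤ N → 2 ^ N < n → k ≤ N - 1 →
      x k = 1 → (∀ j < N, j ≠ k → x j = 0) →
      ∫ t in IN N, |fejer n (x - t)| ∂haarG ≤ c * 2 ^ k / 2 ^ N := by
  refine ⟨2, by norm_num, ?_⟩
  intro N n k x hN hn hk hxk _hx0
  have hkN : k < N := by omega
  have hnpos : 0 < n := by
    have := Nat.two_pow_pos N
    omega
  have hμfin : haarG (IN N) < ⊤ := by
    rw [haarG_IN]
    exact ENNReal.inv_lt_top.2 (by positivity)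
  have hbound : ∀ t ∈ IN N, ‖|fejer n (x - t)|‖ ≤ 2 ^ (k + 1) := by
    intro t ht
    have hy : (x - t) k = 1 := by
      have htk : t k = 0 := ht k hkN
      simp [Pi.sub_apply, htk, hxk]
    rw [Real.norm_eq_abs, abs_abs]
    exact abs_fejer_le hy hnpos
  have hmain := norm_setIntegral_le_of_norm_le_const hμfin hbound
  have htoReal : (haarG (IN N)).toReal = (2 ^ N : ℝ)⁻¹ := by
    rw [haarG_IN]
    simp [ENNReal.toReal_inv, ENNReal.toReal_pow]
  rw [measureReal_def, htoReal] at hmain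
  have h1 : ∫ t in IN N, |fejer n (x - t)| ∂haarG
      ≤ ‖∫ t in IN N, |fejer n (x - t)| ∂haarG‖ := le_abs_self _
  calc ∫ t in IN N, |fejer n (x - t)| ∂haarG
      ≤ (2 : ℝ) ^ (k + 1) * (2 ^ N : ℝ)⁻¹ := h1.trans hmain
    _ = 2 * 2 ^ k / 2 ^ N := by ring
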